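/- Let P(x) be an m×m matrix polynomial, B₁(x),…,B_q(x) regular pairwise commuting and pairwise right coprime m×m matrix polynomials, W₁(x),…,W_q(x) m×m matrix polynomials, Cᵢ(x) = ∏_{j≠i} Bⱼ(x), and suppose P(x) = ∏ᵢ Bᵢ(x) + Σᵢ Wᵢ(x)Cᵢ(x). Then A(x) = diag(B₁(x),…,B_q(x)) + (e ⊗ I_m)[W₁(x),…,W_q(x)] is equivalent to P(x): there exist unimodular qm×qm matrix polynomials E(x), F(x) with E(x)A(x)F(x) = I_{m(q−1)} ⊕ P(x). -/

import Mathlib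

open Polynomial Matrix

/-- Ordered product `B₁(x)⋯B_q(x)` of matrix polynomials. -/
noncomputable def mpProd {q m : ℕ} (f : Fin q → Matrix (Fin m) (Fin m) (Polynomial ℂ)) :
    Matrix (Fin m) (Fin m) (Polynomial ℂ) :=
  ((List.finRange q).map f).prod

/-- Ordered product `Cᵢ(x) = ∏_{j≠i} Bⱼ(x)`. -/
noncomputable def mpProdErase {q m : ℕ} (f : Fin q → Matrix (Fin m) (Fin m) (Polynomial ℂ))
    (i : Fin q) : Matrix (Fin m) (Fin m) (Polynomial ℂ) :=
  (((List.finRange q).erase i).map f).prod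

/-- The secular matrix polynomial
`A(x) = diag(B₁(x),…,B_q(x)) + (e ⊗ I_m)[W₁(x),…,W_q(x)]`. -/
noncomputable def secA {q m : ℕ} (B W : Fin q → Matrix (Fin m) (Fin m) (Polynomial ℂ)) :
    Matrix (Fin q × Fin m) (Fin q × Fin m) (Polynomial ℂ) :=
  Matrix.of fun p₁ p₂ : Fin q × Fin m =>
    (if p₁.1 = p₂.1 then B p₁.1 p₁.2 p₂.2 else 0) + W p₂.1 p₁.2 p₂.2

/-- Unimodular matrix polynomial: the determinant is a nonzero constant. -/
noncomputable def Unimodular {k : Type*} [Fintype k] [DecidableEq k]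
    (M : Matrix k k (Polynomial ℂ)) : Prop :=
  ∃ c : ℂ, c ≠ 0 ∧ M.det = Polynomial.C c

/-- The block diagonal matrix `I_{m(q-1)} ⊕ P(x)`, with `P` in the last block. -/
noncomputable def dsumIP (q m : ℕ) (P : Matrix (Fin m) (Fin m) (Polynomial ℂ)) :
    Matrix (Fin q × Fin m) (Fin q × Fin m) (Polynomial ℂ) :=
  Matrix.of fun p₁ p₂ : Fin q × Fin m =>
    if p₁.1 = p₂.1 then
      (if (p₁.1 : ℕ) = q - 1 then P p₁.2 p₂.2
       else if p₁.2 = p₂.2 then 1 else 0)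
    else 0

namespace SecAux

/-! ### Ring-level coprimality lemmas -/

theorem cop_mul_left {A : Type*} [Ring A] {a b c : A}
    (h1 : ∃ x y, a*x + c*y = 1) (h2 : ∃ u v, b*u + c*v = 1) (hbc : c*b = b*c) :
    ∃ s t, (b*a)*s + c*t = 1 := by
  obtain ⟨x, y, h1⟩ := h1; obtain ⟨u, v, h2⟩ := h2
  refine ⟨x*u, b*(y*u) + v, ?_⟩
  have e1 : (b*a)*(x*u) + c*(b*(y*u) + v) = b*(a*x)*u + (c*b)*(y*u) + c*v := by noncomm_ring
  rw [e1, hbc]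
  have e2 : b*(a*x)*u + (b*c)*(y*u) + c*v = b*((a*x + c*y)*u) + c*v := by noncomm_ring
  rw [e2, h1, one_mul, h2]

theorem cop_mul_right {A : Type*} [Ring A] {a b c : A}
    (h1 : ∃ x y, c*x + a*y = 1) (h2 : ∃ u v, c*u + b*v = 1) (hbc : c*b = b*c) :
    ∃ s t, c*s + (b*a)*t = 1 := by
  obtain ⟨x, y, h1⟩ := h1; obtain ⟨u, v, h2⟩ := h2
  refine ⟨u + b*(x*v), y*v, ?_⟩
  have e1 : c*(u + b*(x*v)) + (b*a)*(y*v) = c*u + (c*b)*(x*v) + b*(a*y)*v := by noncomm_ring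
  rw [e1, hbc]
  have e2 : c*u + (b*c)*(x*v) + b*(a*y)*v = c*u + b*((c*x + a*y)*v) := by noncomm_ring
  rw [e2, h1, one_mul, h2]

/-! ### Recursions for `mpProd` and `mpProdErase` -/

theorem mpProd_succ {q m : ℕ} (f : Fin (q+1) → Matrix (Fin m) (Fin m) (Polynomial ℂ)) :
    mpProd f = f 0 * mpProd (f ∘ Fin.succ) := by
  unfold mpProd
  rw [List.finRange_succ]
  simp [List.map_map]

theorem mpProdErase_zero {q m : ℕ} (f : Fin (q+1) → Matrix (Fin m) (Fin m) (Polynomial ℂ)) :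
    mpProdErase f 0 = mpProd (f ∘ Fin.succ) := by
  unfold mpProdErase mpProd
  rw [List.finRange_succ, List.erase_cons_head, List.map_map]

theorem mpProdErase_succ {q m : ℕ} (f : Fin (q+1) → Matrix (Fin m) (Fin m) (Polynomial ℂ))
    (j : Fin q) :
    mpProdErase f j.succ = f 0 * mpProdErase (f ∘ Fin.succ) j := by
  unfold mpProdErase
  rw [List.finRange_succ, List.erase_cons_tail (by simp [(Fin.succ_ne_zero j).symm]),
    ← List.map_erase (Fin.succ_injective q), List.map_cons, List.prod_cons, List.map_map]

/-! ### Structured block matrices -/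

variable {R : Type*} [CommRing R] {m q : ℕ}

/-- `M` placed in tail-block `0` of a block row vector. -/
def rB (M : Matrix (Fin m) (Fin m) R) : Matrix (Fin m) (Fin (q+1) × Fin m) R :=
  Matrix.of fun x p => if p.1 = 0 then M x p.2 else 0

/-- `M` placed in tail-block `0` of a block column vector. -/
def cB (M : Matrix (Fin m) (Fin m) R) : Matrix (Fin (q+1) × Fin m) (Fin m) R :=
  Matrix.of fun p y => if p.1 = 0 then M p.2 y else 0

/-- Block diagonal `diag(M, 1, …, 1)`. -/
def dB (M : Matrix (Fin m) (Fin m) R) : Matrix (Fin (q+1) × Fin m) (Fin (q+1) × Fin m) R :=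
  Matrix.of fun p p' =>
    if p.1 = p'.1 then (if p.1 = 0 then M p.2 p'.2 else if p.2 = p'.2 then (1:R) else 0) else 0

/-- Column block vector with every block equal to `M`. -/
def aC (M : Matrix (Fin m) (Fin m) R) : Matrix (Fin (q+1) × Fin m) (Fin m) R :=
  Matrix.of fun p y => M p.2 y

/-- Row block vector with blocks `V 0, V 1, …`. -/
def wR (V : Fin (q+1) → Matrix (Fin m) (Fin m) R) : Matrix (Fin m) (Fin (q+1) × Fin m) R :=
  Matrix.of fun x p => V p.1 x p.2

theorem mul_rB (M N : Matrix (Fin m) (Fin m) R) :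
    M * (rB (q := q) N) = rB (M * N) := by
  apply Matrix.ext; rintro x ⟨j, y⟩
  by_cases h : j = 0 <;> simp [rB, Matrix.mul_apply, h]

theorem rB_mul_cB (M N : Matrix (Fin m) (Fin m) R) :
    (rB (q := q) M) * cB (q := q) N = M * N := by
  apply Matrix.ext; rintro x y
  rw [Matrix.mul_apply, Fintype.sum_prod_type,
    Fintype.sum_eq_single (0 : Fin (q+1)) (by intro i hi; simp [rB, cB, hi])]
  simp [rB, cB, Matrix.mul_apply]

theorem rB_mul_aC (M N : Matrix (Fin m) (Fin m) R) :
    (rB (q := q) M) * aC (q := q) N = M * N := by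
  apply Matrix.ext; rintro x y
  rw [Matrix.mul_apply, Fintype.sum_prod_type,
    Fintype.sum_eq_single (0 : Fin (q+1)) (by intro i hi; simp [rB, aC, hi])]
  simp [rB, aC, Matrix.mul_apply]

theorem rB_mul_dB (M N : Matrix (Fin m) (Fin m) R) :
    (rB (q := q) M) * dB (q := q) N = rB (M * N) := by
  apply Matrix.ext; rintro x ⟨j, y⟩
  rw [Matrix.mul_apply, Fintype.sum_prod_type,
    Fintype.sum_eq_single (0 : Fin (q+1)) (by intro i hi; simp [rB, dB, hi])]
  by_cases h : j = 0 <;> simp [rB, dB, h, eq_comm (a := (0 : Fin (q+1))), Matrix.mul_apply]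

theorem dB_mul_cB (M N : Matrix (Fin m) (Fin m) R) :
    (dB (q := q) M) * cB (q := q) N = cB (M * N) := by
  apply Matrix.ext; rintro ⟨i, x⟩ y
  rw [Matrix.mul_apply, Fintype.sum_prod_type,
    Fintype.sum_eq_single (0 : Fin (q+1)) (by intro k hk; simp [dB, cB, hk])]
  by_cases h : i = 0 <;> simp [dB, cB, h, Matrix.mul_apply]

/-- The splitting equivalence `Fin (q+1) × Fin m ≃ Fin m ⊕ (Fin q × Fin m)`. -/
def splitE (q m : ℕ) : (Fin (q+1) × Fin m) ≃ (Fin m ⊕ (Fin q × Fin m)) where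
  toFun p := Fin.cases (motive := fun _ => Fin m ⊕ (Fin q × Fin m))
    (Sum.inl p.2) (fun j => Sum.inr (j, p.2)) p.1
  invFun s := Sum.elim (fun x => ((0 : Fin (q+1)), x)) (fun pr => (pr.1.succ, pr.2)) s
  left_inv := by
    rintro ⟨i, x⟩
    refine Fin.cases ?_ ?_ i <;> simp
  right_inv := by rintro (x | ⟨j, y⟩) <;> simp

@[simp] theorem splitE_zero (x : Fin m) : splitE q m (0, x) = Sum.inl x := by simp [splitE]
@[simp] theorem splitE_succ (j : Fin q) (x : Fin m) :
    splitE q m (j.succ, x) = Sum.inr (j, x) := by simp [splitE]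

theorem dB_eq_submatrix (M : Matrix (Fin m) (Fin m) R) :
    dB (q := q) M =
      (Matrix.fromBlocks M 0 0 (1 : Matrix (Fin q × Fin m) (Fin q × Fin m) R)).submatrix
        (splitE q m) (splitE q m) := by
  apply Matrix.ext; rintro ⟨i, x⟩ ⟨j, y⟩
  refine Fin.cases ?_ ?_ i <;> [skip; intro i] <;> refine Fin.cases ?_ ?_ j <;>
    try intro j
  · simp [dB]
  · simp [dB, (Fin.succ_ne_zero j).symm]
  · simp [dB, Fin.succ_ne_zero i]
  · simp [dB, Matrix.one_apply, Fin.succ_inj, Prod.ext_iff, Fin.succ_ne_zero, ite_and]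

theorem det_dB (M : Matrix (Fin m) (Fin m) R) : (dB (q := q) M).det = M.det := by
  rw [dB_eq_submatrix, Matrix.det_submatrix_equiv_self, Matrix.det_fromBlocks_zero₂₁]
  simp

/-! ### `secA`-specific block computations -/

theorem rB_one_mul_secA (Bs Ws : Fin (q+1) → Matrix (Fin m) (Fin m) (Polynomial ℂ)) :
    rB (q := q) (1 : Matrix (Fin m) (Fin m) (Polynomial ℂ)) * secA Bs Ws = rB (Bs 0) + wR Ws := by
  apply Matrix.ext
  rintro x ⟨j, y⟩
  rw [Matrix.mul_apply, Fintype.sum_prod_type,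
    Fintype.sum_eq_single (0 : Fin (q+1)) (by intro i hi; simp [rB, hi])]
  by_cases h : j = 0
  · subst h; simp [rB, wR, secA, Matrix.one_apply, Finset.sum_ite_eq]
  · simp [rB, wR, secA, Matrix.one_apply, h, Ne.symm h, Finset.sum_ite_eq]

theorem key22 (M N D : Matrix (Fin m) (Fin m) (Polynomial ℂ))
    (Bs Ws Bs' Ws' : Fin (q+1) → Matrix (Fin m) (Fin m) (Polynomial ℂ))
    (hB0 : Bs' 0 = Bs 0 * D) (hBs : ∀ k : Fin q, Bs' k.succ = Bs k.succ)
    (hW0 : Ws' 0 = M * N + Ws 0 * D) (hWs : ∀ k : Fin q, Ws' k.succ = Ws k.succ) :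
    aC M * rB N + secA Bs Ws * dB D = secA Bs' Ws' := by
  apply Matrix.ext
  rintro ⟨i, x⟩ ⟨j, y⟩
  rw [Matrix.add_apply, Matrix.mul_apply, Matrix.mul_apply (M := secA Bs Ws),
    Fintype.sum_prod_type (f := fun p => secA Bs Ws (i, x) p * dB D p (j, y)),
    Fintype.sum_eq_single j (by intro k hk; simp [dB, hk])]
  refine Fin.cases ?_ ?_ j
  · by_cases h : i = 0
    · subst h
      simp [aC, rB, dB, secA, hB0, hW0, Matrix.mul_apply, Matrix.add_apply,
        Finset.sum_add_distrib, add_mul, Finset.mul_sum]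
      try ring
    · simp [aC, rB, dB, secA, h, hB0, hW0, Matrix.mul_apply, Matrix.add_apply,
        Finset.sum_add_distrib, add_mul]
      try ring
  · intro k
    by_cases h : i = k.succ
    · subst h
      simp [aC, rB, dB, secA, Fin.succ_ne_zero, hBs, hWs, mul_ite, Finset.sum_ite_eq]
    · simp [aC, rB, dB, secA, Fin.succ_ne_zero, h, hBs, hWs, mul_ite, Finset.sum_ite_eq]

theorem secA_split (B W : Fin (q+2) → Matrix (Fin m) (Fin m) (Polynomial ℂ)) :
    secA B W = (Matrix.fromBlocks (B 0 + W 0) (wR (fun j : Fin (q+1) => W j.succ))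
        (aC (W 0)) (secA (fun i : Fin (q+1) => B i.succ) (fun i => W i.succ))).submatrix
        (splitE (q+1) m) (splitE (q+1) m) := by
  apply Matrix.ext
  rintro ⟨i, x⟩ ⟨j, y⟩
  refine Fin.cases ?_ ?_ i <;> [skip; intro i] <;> refine Fin.cases ?_ ?_ j <;> try intro j
  · simp [secA]
  · simp [secA, wR, (Fin.succ_ne_zero j).symm]
  · simp [secA, aC, Fin.succ_ne_zero i]
  · simp [secA, Fin.succ_inj]

theorem dsumIP_split (P : Matrix (Fin m) (Fin m) (Polynomial ℂ)) :
    dsumIP (q+2) m P = (Matrix.fromBlocks 1 0 0 (dsumIP (q+1) m P)).submatrix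
        (splitE (q+1) m) (splitE (q+1) m) := by
  apply Matrix.ext
  rintro ⟨i, x⟩ ⟨j, y⟩
  refine Fin.cases ?_ ?_ i <;> [skip; intro i] <;> refine Fin.cases ?_ ?_ j <;> try intro j
  · simp [dsumIP, Matrix.one_apply]
  · simp [dsumIP, (Fin.succ_ne_zero j).symm]
  · simp [dsumIP, Fin.succ_ne_zero i]
  · have hv : ((i.succ : Fin (q+2)) : ℕ) = (i : ℕ) + 1 := rfl
    by_cases h : i = j
    · subst h
      by_cases h2 : (i : ℕ) = q
      · have h3 : (i : ℕ) + 1 = q + 1 := by omega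
        simp [dsumIP, hv, h2, h3]
      · have h3 : ¬ ((i : ℕ) + 1 = q + 1) := by omega
        simp [dsumIP, hv, h2, h3]
    · simp [dsumIP, Fin.succ_inj, h]

/-! ### Map lemmas -/

theorem rB_map (M : Matrix (Fin m) (Fin m) (Polynomial ℂ))
    (f : Polynomial ℂ →+* FractionRing (Polynomial ℂ)) :
    (rB (q := q) M).map f = rB (M.map f) := by
  apply Matrix.ext; rintro x ⟨j, y⟩
  by_cases h : j = 0 <;> simp [rB, h]

theorem cB_map (M : Matrix (Fin m) (Fin m) (Polynomial ℂ))
    (f : Polynomial ℂ →+* FractionRing (Polynomial ℂ)) :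
    (cB (q := q) M).map f = cB (M.map f) := by
  apply Matrix.ext; rintro ⟨i, x⟩ y
  by_cases h : i = 0 <;> simp [cB, h]

theorem dB_map (M : Matrix (Fin m) (Fin m) (Polynomial ℂ))
    (f : Polynomial ℂ →+* FractionRing (Polynomial ℂ)) :
    (dB (q := q) M).map f = dB (M.map f) := by
  apply Matrix.ext; rintro ⟨i, x⟩ ⟨j, y⟩
  by_cases h : i = j
  · subst h
    by_cases h0 : i = 0
    · simp [dB, h0]
    · by_cases h2 : x = y <;> simp [dB, h0, h2]
  · simp [dB, h]

end SecAux

namespace SecAux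

set_option maxHeartbeats 1000000 in
/-- Unimodularity of the coprimality column/row operation block matrix. -/
theorem det_F1 {m q : ℕ} (B0 B1 a b : Matrix (Fin m) (Fin m) (Polynomial ℂ))
    (hreg0 : B0.det ≠ 0) (hc : B0 * B1 = B1 * B0) (hab : B0 * a + B1 * b = 1) :
    (Matrix.fromBlocks a (rB (q := q) B1) (-(cB b)) (dB B0)).det = 1 := by
  classical
  set K := FractionRing (Polynomial ℂ) with hK
  let φ : Polynomial ℂ →+* K := algebraMap (Polynomial ℂ) K
  have hφ : Function.Injective φ := IsFractionRing.injective _ _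
  have hA0det : (B0.map φ).det = φ B0.det := by
    rw [← RingHom.mapMatrix_apply, ← RingHom.map_det]
  have hdetA0 : (B0.map φ).det ≠ 0 := by
    rw [hA0det]
    intro h
    exact hreg0 (hφ (h.trans (map_zero φ).symm))
  have hu : IsUnit (B0.map φ).det := isUnit_iff_ne_zero.mpr hdetA0
  have h1K : B0.map φ * a.map φ + B1.map φ * b.map φ = 1 := by
    have h := congrArg (fun M : Matrix (Fin m) (Fin m) (Polynomial ℂ) => φ.mapMatrix M) hab
    simp only [_root_.map_add, _root_.map_mul, _root_.map_one, RingHom.mapMatrix_apply] at h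
    exact h
  have hcK : B0.map φ * B1.map φ = B1.map φ * B0.map φ := by
    have h := congrArg (fun M : Matrix (Fin m) (Fin m) (Polynomial ℂ) => φ.mapMatrix M) hc
    simp only [_root_.map_mul, RingHom.mapMatrix_apply] at h
    exact h
  have hinv : (B0.map φ)⁻¹ = a.map φ + B1.map φ * ((B0.map φ)⁻¹ * b.map φ) := by
    apply Matrix.inv_eq_right_inv
    calc B0.map φ * (a.map φ + B1.map φ * ((B0.map φ)⁻¹ * b.map φ))
        = B0.map φ * a.map φ + (B0.map φ * B1.map φ) * ((B0.map φ)⁻¹ * b.map φ) := by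
          noncomm_ring
      _ = B0.map φ * a.map φ + B1.map φ * ((B0.map φ * (B0.map φ)⁻¹) * b.map φ) := by
          rw [hcK]; noncomm_ring
      _ = B0.map φ * a.map φ + B1.map φ * b.map φ := by
          rw [Matrix.mul_nonsing_inv _ hu, one_mul]
      _ = 1 := h1K
  have hF1map : (Matrix.fromBlocks a (rB (q := q) B1) (-(cB b)) (dB B0)).map φ
      = Matrix.fromBlocks (a.map φ) (rB (B1.map φ)) (-(cB (b.map φ))) (dB (B0.map φ)) := by
    rw [Matrix.fromBlocks_map, Matrix.fromBlocks_inj]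
    refine ⟨rfl, rB_map _ _, ?_, dB_map _ _⟩
    apply Matrix.ext
    rintro ⟨i, x⟩ y
    by_cases h : i = 0 <;> simp [cB, h]
  have hG : ((Matrix.fromBlocks a (rB (q := q) B1) (-(cB b)) (dB B0)).map φ)
        * Matrix.fromBlocks 1 0 (cB ((B0.map φ)⁻¹ * b.map φ)) 1
      = Matrix.fromBlocks ((B0.map φ)⁻¹) (rB (B1.map φ)) 0 (dB (B0.map φ)) := by
    rw [hF1map, Matrix.fromBlocks_multiply, Matrix.fromBlocks_inj]
    refine ⟨?_, by simp, ?_, by simp⟩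
    · rw [mul_one, rB_mul_cB]
      exact hinv.symm
    · rw [Matrix.mul_one, dB_mul_cB, ← Matrix.mul_assoc, Matrix.mul_nonsing_inv _ hu,
        Matrix.one_mul]
      exact neg_add_cancel _
  have hdG : (Matrix.fromBlocks (1 : Matrix (Fin m) (Fin m) K) 0
      (cB (q := q) ((B0.map φ)⁻¹ * b.map φ))
      (1 : Matrix (Fin (q+1) × Fin m) (Fin (q+1) × Fin m) K)).det = 1 := by
    rw [Matrix.det_fromBlocks_zero₁₂]
    simp
  have hdetK : ((Matrix.fromBlocks a (rB (q := q) B1) (-(cB b)) (dB B0)).map φ).det = 1 := by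
    have h := congrArg Matrix.det hG
    rw [Matrix.det_mul, hdG, mul_one, Matrix.det_fromBlocks_zero₂₁, det_dB,
      Matrix.det_nonsing_inv, Ring.inverse_mul_cancel _ hu] at h
    exact h
  apply hφ
  rw [RingHom.map_det, RingHom.mapMatrix_apply, _root_.map_one]
  exact hdetK

end SecAux
open SecAux in
theorem secular_ellification (m q : ℕ) (hq : 0 < q)
    (P : Matrix (Fin m) (Fin m) (Polynomial ℂ))
    (B W : Fin q → Matrix (Fin m) (Fin m) (Polynomial ℂ))
    (hreg : ∀ i, (B i).det ≠ 0)
    (hcomm : ∀ i j, B i * B j = B j * B i)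
    (hcop : ∀ i j, i ≠ j → ∃ α β : Matrix (Fin m) (Fin m) (Polynomial ℂ),
      B i * α + B j * β = 1)
    (hP : P = mpProd B + ∑ i, W i * mpProdErase B i) :
    ∃ E F : Matrix (Fin q × Fin m) (Fin q × Fin m) (Polynomial ℂ),
      Unimodular E ∧ Unimodular F ∧ E * secA B W * F = dsumIP q m P := by
  obtain ⟨n, rfl⟩ : ∃ n, q = n + 1 := ⟨q - 1, by omega⟩
  clear hq
  induction n generalizing P with
  | zero =>
      refine ⟨1, 1, ⟨1, one_ne_zero, by simp⟩, ⟨1, one_ne_zero, by simp⟩, ?_⟩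
      rw [one_mul, mul_one]
      have hp0 : P = B 0 + W 0 := by
        rw [hP, mpProd_succ B]
        have h1 : mpProd (B ∘ Fin.succ) = 1 := by simp [mpProd]
        rw [h1, mul_one, Fin.sum_univ_one, mpProdErase_zero]
        rw [h1, mul_one]
      apply Matrix.ext
      rintro ⟨i, x⟩ ⟨j, y⟩
      obtain rfl : i = 0 := Fin.ext (by omega)
      obtain rfl : j = 0 := Fin.ext (by omega)
      simp [secA, dsumIP, hp0]
  | succ n IH =>
      have h01 : (0 : Fin (n+1+1)) ≠ 1 := by simp [Fin.ext_iff]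
      obtain ⟨α, β, hαβ⟩ := hcop 0 1 h01
      have hc01 : B 0 * B 1 = B 1 * B 0 := hcomm 0 1
      set B' : Fin (n+1) → Matrix (Fin m) (Fin m) (Polynomial ℂ) :=
        fun i => Fin.cases (B 1 * B 0) (fun k => B k.succ.succ) i with hB'_def
      set W' : Fin (n+1) → Matrix (Fin m) (Fin m) (Polynomial ℂ) :=
        fun i => Fin.cases (W 0 * B 1 + W 1 * B 0) (fun k => W k.succ.succ) i with hW'_def
      have hB'0 : B' 0 = B 1 * B 0 := by simp [hB'_def]
      have hB's : ∀ k : Fin n, B' k.succ = B k.succ.succ := fun k => by simp [hB'_def]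
      have hW'0 : W' 0 = W 0 * B 1 + W 1 * B 0 := by simp [hW'_def]
      have hW's : ∀ k : Fin n, W' k.succ = W k.succ.succ := fun k => by simp [hW'_def]
      -- hypotheses for the inductive step
      have hreg' : ∀ i, (B' i).det ≠ 0 := by
        intro i
        rcases Fin.eq_zero_or_eq_succ i with rfl | ⟨i', rfl⟩
        · rw [hB'0, Matrix.det_mul]
          exact mul_ne_zero (hreg 1) (hreg 0)
        · rw [hB's i']; exact hreg _
      have keycomm : ∀ a b c : Matrix (Fin m) (Fin m) (Polynomial ℂ),
          a * c = c * a → b * c = c * b → (a * b) * c = c * (a * b) := by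
        intro a b c h1 h2
        rw [mul_assoc, h2, ← mul_assoc, h1, mul_assoc]
      have hcomm' : ∀ i j, B' i * B' j = B' j * B' i := by
        intro i j
        rcases Fin.eq_zero_or_eq_succ i with rfl | ⟨i', rfl⟩ <;>
          rcases Fin.eq_zero_or_eq_succ j with rfl | ⟨j', rfl⟩
        · rfl
        · rw [hB'0, hB's]
          exact keycomm _ _ _ (hcomm 1 _) (hcomm 0 _)
        · rw [hB'0, hB's]
          exact (keycomm _ _ _ (hcomm 1 _) (hcomm 0 _)).symm
        · rw [hB's, hB's]; exact hcomm _ _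
      have hcop' : ∀ i j, i ≠ j → ∃ α' β' : Matrix (Fin m) (Fin m) (Polynomial ℂ),
          B' i * α' + B' j * β' = 1 := by
        intro i j hij
        rcases Fin.eq_zero_or_eq_succ i with rfl | ⟨i', rfl⟩ <;>
          rcases Fin.eq_zero_or_eq_succ j with rfl | ⟨j', rfl⟩
        · exact absurd rfl hij
        · rw [hB'0, hB's]
          have hne1 : (1 : Fin (n+1+1)) ≠ j'.succ.succ := by
            have hv : ((j'.succ.succ : Fin (n+1+1)) : ℕ) = (j' : ℕ) + 2 := rfl
            simp [Fin.ext_iff, hv]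
          exact cop_mul_left (hcop 0 j'.succ.succ (Fin.succ_ne_zero _).symm)
            (hcop 1 j'.succ.succ hne1) (hcomm _ _)
        · rw [hB's, hB'0]
          have hne1 : i'.succ.succ ≠ (1 : Fin (n+1+1)) := by
            have hv : ((i'.succ.succ : Fin (n+1+1)) : ℕ) = (i' : ℕ) + 2 := rfl
            simp [Fin.ext_iff, hv]
          exact cop_mul_right (hcop i'.succ.succ 0 (Fin.succ_ne_zero _))
            (hcop i'.succ.succ 1 hne1) (hcomm _ _)
        · rw [hB's, hB's]
          exact hcop _ _ (fun h => hij (Fin.succ_injective _ h))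
      have hP' : P = mpProd B' + ∑ i, W' i * mpProdErase B' i := by
        have hBtail : B' ∘ Fin.succ = (B ∘ Fin.succ) ∘ Fin.succ := by
          funext k; simp [hB'_def]
        have e1 : mpProd B = B 0 * (B 1 * mpProd ((B ∘ Fin.succ) ∘ Fin.succ)) := by
          rw [mpProd_succ B, mpProd_succ (B ∘ Fin.succ), Function.comp_apply,
            Fin.succ_zero_eq_one]
        have e2 : mpProdErase B 0 = B 1 * mpProd ((B ∘ Fin.succ) ∘ Fin.succ) := by
          rw [mpProdErase_zero, mpProd_succ, Function.comp_apply, Fin.succ_zero_eq_one]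
        have e3 : mpProdErase B (Fin.succ 0) = B 0 * mpProd ((B ∘ Fin.succ) ∘ Fin.succ) := by
          rw [mpProdErase_succ, mpProdErase_zero]
        have e4 : ∀ k : Fin n, mpProdErase B k.succ.succ
            = B 0 * (B 1 * mpProdErase ((B ∘ Fin.succ) ∘ Fin.succ) k) := by
          intro k
          rw [mpProdErase_succ, mpProdErase_succ, Function.comp_apply, Fin.succ_zero_eq_one]
        have e5 : mpProd B' = (B 1 * B 0) * mpProd ((B ∘ Fin.succ) ∘ Fin.succ) := by
          rw [mpProd_succ B', hBtail, hB'0]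
        have e6 : mpProdErase B' 0 = mpProd ((B ∘ Fin.succ) ∘ Fin.succ) := by
          rw [mpProdErase_zero, hBtail]
        have e7 : ∀ k : Fin n, mpProdErase B' k.succ
            = (B 1 * B 0) * mpProdErase ((B ∘ Fin.succ) ∘ Fin.succ) k := by
          intro k; rw [mpProdErase_succ, hBtail, hB'0]
        rw [hP, e1, Fin.sum_univ_succ, Fin.sum_univ_succ, e2, e3, Fin.succ_zero_eq_one,
          e5, Fin.sum_univ_succ, e6, hW'0]
        simp only [e4, e7, hW's]
        have hsum : ∀ k : Fin n,
            W k.succ.succ * (B 0 * (B 1 * mpProdErase ((B ∘ Fin.succ) ∘ Fin.succ) k))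
            = W k.succ.succ * ((B 1 * B 0) * mpProdErase ((B ∘ Fin.succ) ∘ Fin.succ) k) := by
          intro k
          rw [← mul_assoc (B 0), hc01]
        simp only [hsum]
        have hh : B 0 * (B 1 * mpProd ((B ∘ Fin.succ) ∘ Fin.succ))
            = (B 1 * B 0) * mpProd ((B ∘ Fin.succ) ∘ Fin.succ) := by
          rw [← mul_assoc, hc01]
        rw [hh]
        noncomm_ring
      obtain ⟨E', F', hE', hF', hEAF'⟩ := IH P B' W' hreg' hcomm' hcop' hP'
      -- block matrices
      set E1b : Matrix (Fin m ⊕ Fin (n+1) × Fin m) (Fin m ⊕ Fin (n+1) × Fin m) (Polynomial ℂ) := Matrix.fromBlocks 1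
        (-(rB (q := n) (1 : Matrix (Fin m) (Fin m) (Polynomial ℂ)))) 0 1 with hE1b_def
      set F1b : Matrix (Fin m ⊕ Fin (n+1) × Fin m) (Fin m ⊕ Fin (n+1) × Fin m) (Polynomial ℂ) := Matrix.fromBlocks α (rB (B 1)) (-(cB β)) (dB (B 0)) with hF1b_def
      set Ab : Matrix (Fin m ⊕ Fin (n+1) × Fin m) (Fin m ⊕ Fin (n+1) × Fin m) (Polynomial ℂ) := Matrix.fromBlocks (B 0 + W 0) (wR (fun j : Fin (n+1) => W j.succ))
        (aC (W 0)) (secA (fun i : Fin (n+1) => B i.succ) (fun i => W i.succ)) with hAb_def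
      set Zb := aC (q := n) (W 0) * α
        + secA (fun i : Fin (n+1) => B i.succ) (fun i => W i.succ) * (-(cB (q := n) β)) with hZb_def
      set E2b : Matrix (Fin m ⊕ Fin (n+1) × Fin m) (Fin m ⊕ Fin (n+1) × Fin m) (Polynomial ℂ) := Matrix.fromBlocks 1 0 (-Zb) 1 with hE2b_def
      have hM1 : E1b * Ab = Matrix.fromBlocks (B 0) (-(rB (B 1))) (aC (W 0))
          (secA (fun i : Fin (n+1) => B i.succ) (fun i => W i.succ)) := by
        rw [hE1b_def, hAb_def, Matrix.fromBlocks_multiply, Matrix.fromBlocks_inj]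
        refine ⟨?_, ?_, by simp, by simp⟩
        · rw [Matrix.one_mul, Matrix.neg_mul, rB_mul_aC, one_mul]
          exact add_neg_cancel_right _ _
        · rw [Matrix.one_mul, Matrix.neg_mul, rB_one_mul_secA]
          abel
      have hM2 : (E1b * Ab) * F1b = Matrix.fromBlocks 1 0 Zb (secA B' W') := by
        rw [hM1, hF1b_def, Matrix.fromBlocks_multiply, Matrix.fromBlocks_inj]
        refine ⟨?_, ?_, ?_, ?_⟩
        · rw [Matrix.neg_mul, Matrix.mul_neg, neg_neg, rB_mul_cB]
          exact hαβ
        · rw [mul_rB, Matrix.neg_mul, rB_mul_dB, hc01]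
          exact add_neg_cancel _
        · rw [hZb_def]
        · refine key22 (W 0) (B 1) (B 0) _ _ B' W' ?_ (fun k => hB's k) ?_ (fun k => hW's k)
          · rw [hB'0, Fin.succ_zero_eq_one]
          · rw [hW'0, Fin.succ_zero_eq_one]
      have hM3 : E2b * ((E1b * Ab) * F1b) = Matrix.fromBlocks 1 0 0 (secA B' W') := by
        rw [hM2, hE2b_def, Matrix.fromBlocks_multiply]
        simp
      -- unimodularity of F1b via the fraction field
      have hdetF1 : F1b.det = 1 := by
        rw [hF1b_def]
        exact det_F1 (B 0) (B 1) α β (hreg 0) hc01 hαβ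
      -- assemble
      refine ⟨((Matrix.fromBlocks 1 0 0 E') * (E2b * E1b)).submatrix
          (splitE (n+1) m) (splitE (n+1) m),
        (F1b * (Matrix.fromBlocks 1 0 0 F')).submatrix
          (splitE (n+1) m) (splitE (n+1) m), ?_, ?_, ?_⟩
      · obtain ⟨c, hc, hdet⟩ := hE'
        refine ⟨c, hc, ?_⟩
        have d1 : E1b.det = 1 := by
          rw [hE1b_def, Matrix.det_fromBlocks_zero₂₁]; simp
        have d2 : E2b.det = 1 := by
          rw [hE2b_def, Matrix.det_fromBlocks_zero₁₂]; simp
        rw [Matrix.det_submatrix_equiv_self, Matrix.det_mul, Matrix.det_mul, d1, d2,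
          Matrix.det_fromBlocks_zero₂₁, Matrix.det_one, one_mul, hdet, mul_one, mul_one]
      · obtain ⟨c, hc, hdet⟩ := hF'
        refine ⟨c, hc, ?_⟩
        rw [Matrix.det_submatrix_equiv_self, Matrix.det_mul, hdetF1,
          Matrix.det_fromBlocks_zero₂₁, Matrix.det_one, one_mul, hdet, one_mul]
      · rw [secA_split B W, Matrix.submatrix_mul_equiv, Matrix.submatrix_mul_equiv,
          dsumIP_split]
        refine congrArg (fun M => Matrix.submatrix M (splitE (n+1) m) (splitE (n+1) m)) ?_
        calc (Matrix.fromBlocks 1 0 0 E' * (E2b * E1b)) * Ab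
              * (F1b * Matrix.fromBlocks 1 0 0 F')
            = Matrix.fromBlocks 1 0 0 E' * (E2b * ((E1b * Ab) * F1b))
              * Matrix.fromBlocks 1 0 0 F' := by noncomm_ring
          _ = Matrix.fromBlocks 1 0 0 E' * Matrix.fromBlocks 1 0 0 (secA B' W')
              * Matrix.fromBlocks 1 0 0 F' := by rw [hM3]
          _ = Matrix.fromBlocks 1 0 0 (E' * secA B' W' * F') := by
              rw [Matrix.fromBlocks_multiply, Matrix.fromBlocks_multiply]
              simp
          _ = Matrix.fromBlocks 1 0 0 (dsumIP (n+1) m P) := by rw [hEAF']
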